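/- Markov property of the predictor process: fix a controlled-predictor policy and initial pmf π_0, and let t ≥ 0. For any two output histories h, h' ∈ ℳ^t of positive probability under the trajectory law which yield the same predictor π_t (and hence the same Q_t = γ^e(π_t), η_t = γ^c(π_t)), the conditional distribution of π_{t+1} given the history is the same; explicitly, for every ρ ∈ P(𝕏), P(π_{t+1} = ρ | q_{[0,t-1]} = h) = Σ_{q ∈ ℳ : π_t(Q_t⁻¹(q)) > 0 and F(π_t,Q_t,η_t,q) = ρ} π_t(Q_t⁻¹(q)), which depends only on (π_t, Q_t, η_t). -/

import Mathlib

set_option linter.unusedSectionVars false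


open Finset

noncomputable section

variable {X U M : Type}

/-- `π` is a probability mass function on the finite set `X`. -/
def IsPmf [Fintype X] (π : X → ℝ) : Prop :=
  (∀ x, 0 ≤ π x) ∧ ∑ x, π x = 1

/-- Mass that `π` assigns to the cell `Q⁻¹(q)`. -/
def mass [Fintype X] [DecidableEq M] (π : X → ℝ) (Q : X → M) (q : M) : ℝ :=
  ∑ x ∈ Finset.univ.filter (fun x => Q x = q), π x

/-- One-step predictor (Bayesian) update `F(π,Q,η,q)`. -/
def Fupd [Fintype X] [DecidableEq M] (P : X → U → X → ℝ)
    (π : X → ℝ) (Q : X → M) (η : (X → M) → M → U) (q : M) : X → ℝ :=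
  fun x' => (mass π Q q)⁻¹ *
    ∑ x ∈ Finset.univ.filter (fun x => Q x = q), P x (η Q q) x' * π x

/-- Predictor process along a (chronological) list of channel outputs,
under the controlled-predictor policy `(γe, γc)`. -/
def predSeq [Fintype X] [DecidableEq M] (P : X → U → X → ℝ)
    (γe : (X → ℝ) → (X → M)) (γc : (X → ℝ) → ((X → M) → M → U)) :
    (X → ℝ) → List M → (X → ℝ)
  | π, [] => π
  | π, q :: qs => predSeq P γe γc (Fupd P π (γe π) (γc π) q) qs

/-- The predictor `π_s` given output history `qs` (only the first `s` outputs are used). -/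
def predAt [Fintype X] [DecidableEq M] (P : X → U → X → ℝ)
    (γe : (X → ℝ) → (X → M)) (γc : (X → ℝ) → ((X → M) → M → U))
    (π0 : X → ℝ) {n : ℕ} (qs : Fin n → M) (s : ℕ) : X → ℝ :=
  predSeq P γe γc π0 ((List.ofFn qs).take s)

/-- Trajectory law of `(x_{[0,n-1]}, q_{[0,n-1]})` under the controlled-predictor
policy `(γe, γc)` with initial pmf `π0`:
`π0(x_0) ∏_s 1{q_s = Q_s(x_s)} ∏_s P(x_{s+1} | x_s, η_s(Q_s, q_s))`. -/
def law [Fintype X] [Fintype M] [DecidableEq M] (P : X → U → X → ℝ)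
    (γe : (X → ℝ) → (X → M)) (γc : (X → ℝ) → ((X → M) → M → U))
    (π0 : X → ℝ) (n : ℕ) (xs : Fin n → X) (qs : Fin n → M) : ℝ :=
  ∏ s : Fin n,
    ((if (s : ℕ) = 0 then π0 (xs s)
      else
        P (xs ⟨(s : ℕ) - 1, lt_of_le_of_lt (Nat.sub_le _ _) s.isLt⟩)
          (γc (predAt P γe γc π0 qs ((s : ℕ) - 1))
            (γe (predAt P γe γc π0 qs ((s : ℕ) - 1)))
            (qs ⟨(s : ℕ) - 1, lt_of_le_of_lt (Nat.sub_le _ _) s.isLt⟩))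
          (xs s))
      * (if qs s = γe (predAt P γe γc π0 qs (s : ℕ)) (xs s) then 1 else 0))

/-- Probability of the output history `qs` under the trajectory law. -/
def outProb [Fintype X] [Fintype M] [DecidableEq M] (P : X → U → X → ℝ)
    (γe : (X → ℝ) → (X → M)) (γc : (X → ℝ) → ((X → M) → M → U))
    (π0 : X → ℝ) (n : ℕ) (qs : Fin n → M) : ℝ :=
  ∑ xs : Fin n → X, law P γe γc π0 n xs qs

open scoped Classical

section aux

variable [Fintype X] [Fintype U] [Fintype M] [DecidableEq X] [DecidableEq M]
variable (P : X → U → X → ℝ) (γe : (X → ℝ) → (X → M))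
  (γc : (X → ℝ) → ((X → M) → M → U)) (π0 : X → ℝ)

private lemma snoc_eq_dite {α : Type} {n : ℕ} (g : Fin n → α) (q : α) (i : Fin (n + 1)) :
    (Fin.snoc g q : Fin (n + 1) → α) i = if h : (i : ℕ) < n then g ⟨i, h⟩ else q := by
  unfold Fin.snoc
  by_cases h : (i : ℕ) < n
  · simp only [h, dif_pos, cast_eq]
    rfl
  · simp only [h, dif_neg, cast_eq, not_false_iff]

private lemma predSeq_append (l : List M) (q : M) (π : X → ℝ) :
    predSeq P γe γc π (l ++ [q]) =
      Fupd P (predSeq P γe γc π l) (γe (predSeq P γe γc π l))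
        (γc (predSeq P γe γc π l)) q := by
  induction l generalizing π with
  | nil => rfl
  | cons a l ih =>
    simp only [List.cons_append, predSeq]
    exact ih _

private lemma ofFn_snoc' {n : ℕ} (g : Fin n → M) (q : M) :
    List.ofFn (Fin.snoc g q) = List.ofFn g ++ [q] := by
  rw [List.ofFn_succ']
  simp [List.concat_eq_append]

private lemma predAt_snoc_le {n : ℕ} (g : Fin n → M) (q : M) {s : ℕ} (hs : s ≤ n) :
    predAt P γe γc π0 (Fin.snoc g q) s = predAt P γe γc π0 g s := by
  unfold predAt
  rw [ofFn_snoc', List.take_append_of_le_length (by simpa using hs)]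

private lemma predAt_self {n : ℕ} (g : Fin n → M) :
    predAt P γe γc π0 g n = predSeq P γe γc π0 (List.ofFn g) := by
  unfold predAt
  rw [List.take_of_length_le (by simp)]

private lemma predAt_snoc_top {n : ℕ} (g : Fin n → M) (q : M) :
    predAt P γe γc π0 (Fin.snoc g q) (n + 1) =
      Fupd P (predAt P γe γc π0 g n) (γe (predAt P γe γc π0 g n))
        (γc (predAt P γe γc π0 g n)) q := by
  rw [predAt_self, ofFn_snoc', predSeq_append, ← predAt_self]

/-- transition factor into the next state -/
private def trf : (n : ℕ) → (Fin n → M) → (Fin n → X) → X → ℝ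
  | 0, _, _, x => π0 x
  | n + 1, g, ys, x =>
      P (ys (Fin.last n))
        (γc (predAt P γe γc π0 g n) (γe (predAt P γe γc π0 g n)) (g (Fin.last n))) x

private lemma trf_nonneg (hP : ∀ x u, IsPmf (P x u)) (hπ0 : IsPmf π0)
    (n : ℕ) (g : Fin n → M) (ys : Fin n → X) (x : X) :
    0 ≤ trf P γe γc π0 n g ys x := by
  cases n with
  | zero => exact hπ0.1 x
  | succ n => exact (hP _ _).1 x

private lemma law_nonneg (hP : ∀ x u, IsPmf (P x u)) (hπ0 : IsPmf π0)
    (n : ℕ) (xs : Fin n → X) (qs : Fin n → M) :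
    0 ≤ law P γe γc π0 n xs qs := by
  unfold law
  refine Finset.prod_nonneg fun s _ => mul_nonneg ?_ ?_
  · split
    · exact hπ0.1 _
    · exact (hP _ _).1 _
  · split <;> norm_num

private lemma outProb_nonneg (hP : ∀ x u, IsPmf (P x u)) (hπ0 : IsPmf π0)
    (n : ℕ) (qs : Fin n → M) : 0 ≤ outProb P γe γc π0 n qs :=
  Finset.sum_nonneg fun xs _ => law_nonneg P γe γc π0 hP hπ0 n xs qs

private def wfun (n : ℕ) (g : Fin n → M) (x : X) : ℝ :=
  ∑ ys : Fin n → X, law P γe γc π0 n ys g * trf P γe γc π0 n g ys x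

private lemma wfun_nonneg (hP : ∀ x u, IsPmf (P x u)) (hπ0 : IsPmf π0)
    (n : ℕ) (g : Fin n → M) (x : X) : 0 ≤ wfun P γe γc π0 n g x :=
  Finset.sum_nonneg fun ys _ => mul_nonneg (law_nonneg P γe γc π0 hP hπ0 n ys g)
    (trf_nonneg P γe γc π0 hP hπ0 n g ys x)

private def snocE (n : ℕ) : ((Fin n → X) × X) ≃ (Fin (n + 1) → X) where
  toFun p := Fin.snoc p.1 p.2
  invFun f := (Fin.init f, f (Fin.last n))
  left_inv p := by simp
  right_inv f := by simp

private lemma sum_snoc {n : ℕ} (f : (Fin (n + 1) → X) → ℝ) :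
    ∑ xs : Fin (n + 1) → X, f xs = ∑ ys : Fin n → X, ∑ x : X, f (Fin.snoc ys x) := by
  rw [← Equiv.sum_comp (snocE n) f, Fintype.sum_prod_type]
  rfl

private lemma law_succ_snoc {n : ℕ} (ys : Fin n → X) (x : X) (g : Fin n → M) (q : M) :
    law P γe γc π0 (n + 1) (Fin.snoc ys x) (Fin.snoc g q) =
      law P γe γc π0 n ys g * trf P γe γc π0 n g ys x *
        (if q = γe (predAt P γe γc π0 g n) x then 1 else 0) := by
  unfold law
  rw [Fin.prod_univ_castSucc, mul_assoc]
  congr 1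
  · apply Finset.prod_congr rfl
    intro s _
    have hs : (s : ℕ) ≤ n := le_of_lt s.isLt
    have h1 : (s : ℕ) - 1 < n := lt_of_le_of_lt (Nat.sub_le _ _) s.isLt
    simp only [Fin.coe_castSucc, Fin.snoc_castSucc,
      predAt_snoc_le P γe γc π0 g q hs, predAt_snoc_le P γe γc π0 g q h1.le,
      snoc_eq_dite, h1, s.isLt, dif_pos, Fin.eta]
  · have hlast : ((Fin.last n : Fin (n + 1)) : ℕ) = n := rfl
    cases n with
    | zero =>
      simp [trf, snoc_eq_dite, Fin.snoc_last, predAt_snoc_le P γe γc π0 g q (le_refl 0)]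
    | succ m =>
      have hm : m < m + 1 := Nat.lt_succ_self m
      simp only [hlast, Fin.snoc_last, Nat.add_sub_cancel, trf,
        predAt_snoc_le P γe γc π0 g q (Nat.le_succ m),
        predAt_snoc_le P γe γc π0 g q (le_refl (m + 1)),
        snoc_eq_dite, hm, dif_pos]
      norm_num
      rfl

private lemma key {n : ℕ} (g : Fin n → M) (q : M) (f : X → ℝ) :
    ∑ xs : Fin (n + 1) → X, law P γe γc π0 (n + 1) xs (Fin.snoc g q) * f (xs (Fin.last n))
      = ∑ x : X, wfun P γe γc π0 n g x *
          ((if q = γe (predAt P γe γc π0 g n) x then 1 else 0) * f x) := by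
  rw [sum_snoc]
  simp only [Fin.snoc_last, law_succ_snoc]
  rw [Finset.sum_comm]
  refine Finset.sum_congr rfl fun x _ => ?_
  unfold wfun
  rw [Finset.sum_mul]
  exact Finset.sum_congr rfl fun ys _ => by ring

private lemma sum_ind_eq_mass (O : ℝ) (π : X → ℝ) (Q : X → M) (q : M) :
    ∑ x : X, O * π x * ((if q = Q x then 1 else 0) * 1) = O * mass π Q q := by
  rw [mass, Finset.sum_filter, Finset.mul_sum]
  refine Finset.sum_congr rfl fun x _ => ?_
  by_cases h : Q x = q
  · simp [h]
  · rw [if_neg h, if_neg (fun hq : q = Q x => h hq.symm)]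
    ring

private lemma wfun_eq (hP : ∀ x u, IsPmf (P x u)) (hπ0 : IsPmf π0) :
    ∀ (n : ℕ) (g : Fin n → M) (x : X),
      wfun P γe γc π0 n g x = outProb P γe γc π0 n g * predAt P γe γc π0 g n x := by
  intro n
  induction n with
  | zero =>
    intro g x
    simp [wfun, outProb, law, predAt, predSeq, trf]
  | succ n ih =>
    intro h x
    obtain ⟨g, q, rfl⟩ : ∃ g q, h = Fin.snoc g q :=
      ⟨Fin.init h, h (Fin.last n), (Fin.snoc_init_self h).symm⟩
    set π := predAt P γe γc π0 g n with hπdef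
    set O := outProb P γe γc π0 n g with hOdef
    have hout : outProb P γe γc π0 (n + 1) (Fin.snoc g q) = O * mass π (γe π) q := by
      have hk := key P γe γc π0 g q (fun _ => (1 : ℝ))
      simp only [mul_one] at hk
      unfold outProb
      rw [show (∑ xs : Fin (n + 1) → X, law P γe γc π0 (n + 1) xs (Fin.snoc g q))
          = ∑ x : X, wfun P γe γc π0 n g x *
              (if q = γe (predAt P γe γc π0 g n) x then 1 else 0) from hk]
      simp only [ih]
      rw [← sum_ind_eq_mass O π (γe π) q]
      exact Finset.sum_congr rfl fun y _ => by ring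
    have hw : wfun P γe γc π0 (n + 1) (Fin.snoc g q) x
        = ∑ y : X, O * π y *
            ((if q = γe π y then 1 else 0) * P y (γc π (γe π) q) x) := by
      unfold wfun
      have htr : ∀ ys : Fin (n + 1) → X,
          trf P γe γc π0 (n + 1) (Fin.snoc g q) ys x
            = P (ys (Fin.last n)) (γc π (γe π) q) x := by
        intro ys
        simp only [trf, predAt_snoc_le P γe γc π0 g q (le_refl n), Fin.snoc_last, hπdef]
      simp only [htr]
      rw [key P γe γc π0 g q (fun y => P y (γc π (γe π) q) x)]
      simp only [ih]
      rfl
    rw [hw, hout, predAt_snoc_top]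
    rcases eq_or_ne O 0 with hO | hO
    · simp [hO]
    · have hOpos : 0 < O :=
        lt_of_le_of_ne (outProb_nonneg P γe γc π0 hP hπ0 n g) (Ne.symm hO)
      have hπnn : ∀ y, 0 ≤ π y := by
        intro y
        have h1 := wfun_nonneg P γe γc π0 hP hπ0 n g y
        rw [ih] at h1
        exact nonneg_of_mul_nonneg_right h1 hOpos
      rcases eq_or_ne (mass π (γe π) q) 0 with hm | hm
      · have hcell : ∀ y, γe π y = q → π y = 0 := by
          intro y hy
          have := (Finset.sum_eq_zero_iff_of_nonneg
            (fun z _ => hπnn z)).mp hm y (by simp [hy])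
          exact this
        rw [hm]
        rw [Finset.sum_eq_zero]
        · ring
        · intro y _
          by_cases hy : q = γe π y
          · rw [hcell y hy.symm]; ring
          · simp [hy]
      · rw [← hπdef]
        rw [show Fupd P π (γe π) (γc π) q x
            = (mass π (γe π) q)⁻¹ *
              ∑ y ∈ Finset.univ.filter (fun y => γe π y = q),
                P y (γc π (γe π) q) x * π y from rfl,
          Finset.sum_filter]
        rw [show ∀ S : ℝ, O * mass π (γe π) q * ((mass π (γe π) q)⁻¹ * S) = O * S from
          fun S => by field_simp]
        rw [Finset.mul_sum]
        refine Finset.sum_congr rfl fun y _ => ?_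
        by_cases hy : γe π y = q
        · rw [if_pos hy, if_pos hy.symm]
          ring
        · rw [if_neg hy, if_neg (fun hq : q = γe π y => hy hq.symm)]
          ring

private lemma outProb_snoc (hP : ∀ x u, IsPmf (P x u)) (hπ0 : IsPmf π0)
    {n : ℕ} (g : Fin n → M) (q : M) :
    outProb P γe γc π0 (n + 1) (Fin.snoc g q) =
      outProb P γe γc π0 n g *
        mass (predAt P γe γc π0 g n) (γe (predAt P γe γc π0 g n)) q := by
  have hk := key P γe γc π0 g q (fun _ => (1 : ℝ))
  simp only [mul_one] at hk
  calc outProb P γe γc π0 (n + 1) (Fin.snoc g q)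
      = ∑ x : X, wfun P γe γc π0 n g x *
          (if q = γe (predAt P γe γc π0 g n) x then 1 else 0) := by
        unfold outProb; exact hk
    _ = ∑ x : X, outProb P γe γc π0 n g * predAt P γe γc π0 g n x *
          ((if q = γe (predAt P γe γc π0 g n) x then 1 else 0) * 1) := by
        refine Finset.sum_congr rfl fun y _ => ?_
        rw [wfun_eq P γe γc π0 hP hπ0 n g y]; ring
    _ = _ := sum_ind_eq_mass _ _ _ _

private lemma main_side (hP : ∀ x u, IsPmf (P x u)) (hπ0 : IsPmf π0)
    {t : ℕ} (hh : Fin t → M) (hpos : 0 < outProb P γe γc π0 t hh)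
    (ρ : X → ℝ) (hρ : IsPmf ρ) :
    (∑ q ∈ Finset.univ.filter
          (fun q : M => predAt P γe γc π0 (Fin.snoc hh q) (t + 1) = ρ),
        outProb P γe γc π0 (t + 1) (Fin.snoc hh q))
        / outProb P γe γc π0 t hh
      = ∑ q ∈ Finset.univ.filter
            (fun q : M =>
              0 < mass (predAt P γe γc π0 hh t) (γe (predAt P γe γc π0 hh t)) q ∧
              Fupd P (predAt P γe γc π0 hh t) (γe (predAt P γe γc π0 hh t))
                  (γc (predAt P γe γc π0 hh t)) q = ρ),
          mass (predAt P γe γc π0 hh t) (γe (predAt P γe γc π0 hh t)) q := by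
  set π := predAt P γe γc π0 hh t with hπdef
  have hπnn : ∀ y, 0 ≤ π y := by
    intro y
    have h1 := wfun_nonneg P γe γc π0 hP hπ0 t hh y
    rw [wfun_eq P γe γc π0 hP hπ0 t hh y] at h1
    exact nonneg_of_mul_nonneg_right h1 hpos
  have hρ0 : ρ ≠ fun _ => (0 : ℝ) := by
    intro hc
    have : (∑ x : X, ρ x) = 0 := by rw [hc]; simp
    rw [hρ.2] at this
    norm_num at this
  have hfil : (Finset.univ.filter
        (fun q : M => predAt P γe γc π0 (Fin.snoc hh q) (t + 1) = ρ))
      = Finset.univ.filter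
          (fun q : M => 0 < mass π (γe π) q ∧ Fupd P π (γe π) (γc π) q = ρ) := by
    ext q
    simp only [Finset.mem_filter, Finset.mem_univ, true_and,
      predAt_snoc_top P γe γc π0 hh q, ← hπdef]
    constructor
    · intro hq
      refine ⟨?_, hq⟩
      rcases eq_or_ne (mass π (γe π) q) 0 with hm | hm
      · exfalso
        apply hρ0
        rw [← hq]
        funext x'
        simp [Fupd, hm]
      · exact lt_of_le_of_ne
          (Finset.sum_nonneg fun y _ => hπnn y) (Ne.symm hm)
    · exact fun hq => hq.2
  rw [hfil]
  rw [show (∑ q ∈ Finset.univ.filter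
        (fun q : M => 0 < mass π (γe π) q ∧ Fupd P π (γe π) (γc π) q = ρ),
      outProb P γe γc π0 (t + 1) (Fin.snoc hh q))
      = ∑ q ∈ Finset.univ.filter
          (fun q : M => 0 < mass π (γe π) q ∧ Fupd P π (γe π) (γc π) q = ρ),
        outProb P γe γc π0 t hh * mass π (γe π) q from
    Finset.sum_congr rfl fun q _ => outProb_snoc P γe γc π0 hP hπ0 hh q]
  rw [← Finset.mul_sum]
  exact mul_div_cancel_left₀ _ (ne_of_gt hpos)

end aux

/-- Markov property of the predictor process: fix a controlled-predictor
policy and initial pmf `π_0`, and let `t ≥ 0`. For any two output histories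
`h, h' ∈ ℳ^t` of positive probability under the trajectory law which yield the same
predictor `π_t` (hence the same `Q_t = γ^e(π_t)`, `η_t = γ^c(π_t)`), the conditional
distribution of `π_{t+1}` given the history is the same; explicitly, for every
`ρ ∈ P(𝕏)`,
`P(π_{t+1} = ρ | q_{[0,t-1]} = h) = Σ_{q : π_t(Q_t⁻¹(q)) > 0, F(π_t,Q_t,η_t,q) = ρ} π_t(Q_t⁻¹(q))`,
which depends only on `(π_t, Q_t, η_t)`. -/
theorem predictor_markov_property
    [Fintype X] [Fintype U] [Fintype M]
    [Nonempty X] [Nonempty U] [Nonempty M] [DecidableEq X] [DecidableEq M]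
    (P : X → U → X → ℝ) (hP : ∀ x u, IsPmf (P x u))
    (γe : (X → ℝ) → (X → M)) (γc : (X → ℝ) → ((X → M) → M → U))
    (π0 : X → ℝ) (hπ0 : IsPmf π0)
    (t : ℕ) (h h' : Fin t → M)
    (hpos : 0 < outProb P γe γc π0 t h) (hpos' : 0 < outProb P γe γc π0 t h')
    (heq : predAt P γe γc π0 h t = predAt P γe γc π0 h' t)
    (ρ : X → ℝ) (hρ : IsPmf ρ) :
    ((∑ q ∈ Finset.univ.filter
          (fun q : M => predAt P γe γc π0 (Fin.snoc h q) (t + 1) = ρ),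
        outProb P γe γc π0 (t + 1) (Fin.snoc h q))
        / outProb P γe γc π0 t h
      = ∑ q ∈ Finset.univ.filter
            (fun q : M =>
              0 < mass (predAt P γe γc π0 h t) (γe (predAt P γe γc π0 h t)) q ∧
              Fupd P (predAt P γe γc π0 h t) (γe (predAt P γe γc π0 h t))
                  (γc (predAt P γe γc π0 h t)) q = ρ),
          mass (predAt P γe γc π0 h t) (γe (predAt P γe γc π0 h t)) q)
    ∧
    ((∑ q ∈ Finset.univ.filter
          (fun q : M => predAt P γe γc π0 (Fin.snoc h' q) (t + 1) = ρ),
        outProb P γe γc π0 (t + 1) (Fin.snoc h' q))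
        / outProb P γe γc π0 t h'
      = ∑ q ∈ Finset.univ.filter
            (fun q : M =>
              0 < mass (predAt P γe γc π0 h t) (γe (predAt P γe γc π0 h t)) q ∧
              Fupd P (predAt P γe γc π0 h t) (γe (predAt P γe γc π0 h t))
                  (γc (predAt P γe γc π0 h t)) q = ρ),
          mass (predAt P γe γc π0 h t) (γe (predAt P γe γc π0 h t)) q) := by
  constructor
  · exact main_side P γe γc π0 hP hπ0 h hpos ρ hρ
  · have h2 := main_side P γe γc π0 hP hπ0 h' hpos' ρ hρ
    rw [← heq] at h2
    exact h2

end
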